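/- For every integer d ≥ 2 and n ≥ 1, the function f_{d,n}(r) = (r - r^d)/(r^{d+1}+n)^{d/(d+1)} is strictly concave on the interval [0,1]. -/

import Mathlib

open Real Set Filter Topology

/-- The function `f_{d,n}(r) = (r - r^d)/(r^(d+1)+n)^(d/(d+1))` is strictly concave on `[0,1]`. -/
theorem f_strictConcave (d n : ℕ) (hd : 2 ≤ d) (hn : 1 ≤ n) :
    StrictConcaveOn ℝ (Set.Icc (0 : ℝ) 1)
      (fun r : ℝ => (r - r ^ d) / (r ^ (d + 1) + (n : ℝ)) ^ ((d : ℝ) / ((d : ℝ) + 1))) := by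
  obtain ⟨m, rfl⟩ : ∃ m, d = m + 2 := ⟨d - 2, by omega⟩
  clear hd
  set P : ℝ := ((m + 2 : ℕ) : ℝ) / (((m + 2 : ℕ) : ℝ) + 1) with hPdef
  have hP0 : 0 ≤ P := by positivity
  have hN1 : (1 : ℝ) ≤ (n : ℝ) := by exact_mod_cast hn
  have hN0 : (0 : ℝ) < (n : ℝ) := by linarith
  -- the version with a negative real power
  set g : ℝ → ℝ := fun r => (r - r ^ (m + 2)) * (r ^ (m + 3) + (n : ℝ)) ^ (-P) with hgdef
  set g1 : ℝ → ℝ := fun r =>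
      (1 - ((m + 2 : ℕ) : ℝ) * r ^ (m + 1)) * (r ^ (m + 3) + (n : ℝ)) ^ (-P) +
        (r - r ^ (m + 2)) *
          (((m + 3 : ℕ) : ℝ) * r ^ (m + 2) * -P * (r ^ (m + 3) + (n : ℝ)) ^ (-P - 1))
    with hg1def
  have hv : ∀ x : ℝ, 0 ≤ x → (0 : ℝ) < x ^ (m + 3) + (n : ℝ) := fun x hx => by positivity
  have key1 : ∀ x : ℝ, 0 < x → HasDerivAt g (g1 x) x := by
    intro x hx
    have hvd : HasDerivAt (fun r : ℝ => r ^ (m + 3) + (n : ℝ)) (((m + 3 : ℕ) : ℝ) * x ^ (m + 2)) x := by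
      simpa using (hasDerivAt_pow (m + 3) x).add_const (n : ℝ)
    have hw : HasDerivAt (fun r : ℝ => (r ^ (m + 3) + (n : ℝ)) ^ (-P))
        (((m + 3 : ℕ) : ℝ) * x ^ (m + 2) * -P * (x ^ (m + 3) + (n : ℝ)) ^ (-P - 1)) x :=
      hvd.rpow_const (Or.inl (hv x hx.le).ne')
    have hu : HasDerivAt (fun r : ℝ => r - r ^ (m + 2)) (1 - ((m + 2 : ℕ) : ℝ) * x ^ (m + 1)) x := by
      have hp : HasDerivAt (fun r : ℝ => r ^ (m + 2)) (((m + 2 : ℕ) : ℝ) * x ^ (m + 1)) x := by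
        simpa using hasDerivAt_pow (m + 2) x
      exact (hasDerivAt_id' x).sub hp
    exact hu.mul hw
  have key2 : ∀ x : ℝ, 0 < x → x < 1 → HasDerivAt g1
      ((x ^ (m + 3) + (n : ℝ)) ^ (-P - 2) *
        (((m + 2 : ℕ) : ℝ) * ((m + 1 : ℕ) : ℝ) * x ^ (2 * m + 5) +
          (n : ℝ) * ((m + 2 : ℕ) : ℝ) * ((m + 4 : ℕ) : ℝ) * x ^ (2 * m + 3) -
          (n : ℝ) * ((m + 2 : ℕ) : ℝ) * ((m + 4 : ℕ) : ℝ) * x ^ (m + 2) -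
          (n : ℝ) ^ 2 * ((m + 2 : ℕ) : ℝ) * ((m + 1 : ℕ) : ℝ) * x ^ m)) x := by
    intro x hx hx1
    have hvx : (0 : ℝ) < x ^ (m + 3) + (n : ℝ) := hv x hx.le
    have hvd : HasDerivAt (fun r : ℝ => r ^ (m + 3) + (n : ℝ)) (((m + 3 : ℕ) : ℝ) * x ^ (m + 2)) x := by
      simpa using (hasDerivAt_pow (m + 3) x).add_const (n : ℝ)
    have hw : HasDerivAt (fun r : ℝ => (r ^ (m + 3) + (n : ℝ)) ^ (-P))
        (((m + 3 : ℕ) : ℝ) * x ^ (m + 2) * -P * (x ^ (m + 3) + (n : ℝ)) ^ (-P - 1)) x :=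
      hvd.rpow_const (Or.inl hvx.ne')
    have hw1 : HasDerivAt (fun r : ℝ => (r ^ (m + 3) + (n : ℝ)) ^ (-P - 1))
        (((m + 3 : ℕ) : ℝ) * x ^ (m + 2) * (-P - 1) * (x ^ (m + 3) + (n : ℝ)) ^ (-P - 1 - 1)) x :=
      hvd.rpow_const (Or.inl hvx.ne')
    have hu : HasDerivAt (fun r : ℝ => r - r ^ (m + 2)) (1 - ((m + 2 : ℕ) : ℝ) * x ^ (m + 1)) x := by
      have hp : HasDerivAt (fun r : ℝ => r ^ (m + 2)) (((m + 2 : ℕ) : ℝ) * x ^ (m + 1)) x := by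
        simpa using hasDerivAt_pow (m + 2) x
      exact (hasDerivAt_id' x).sub hp
    have hA1 : HasDerivAt (fun r : ℝ => 1 - ((m + 2 : ℕ) : ℝ) * r ^ (m + 1))
        (-(((m + 2 : ℕ) : ℝ) * (((m + 1 : ℕ) : ℝ) * x ^ m))) x := by
      simpa using (((hasDerivAt_pow (m + 1) x).const_mul ((m + 2 : ℕ) : ℝ)).const_sub 1)
    have hB1 : HasDerivAt (fun r : ℝ => ((m + 3 : ℕ) : ℝ) * r ^ (m + 2) * -P)
        (((m + 3 : ℕ) : ℝ) * (((m + 2 : ℕ) : ℝ) * x ^ (m + 1)) * -P) x := by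
      simpa using ((hasDerivAt_pow (m + 2) x).const_mul ((m + 3 : ℕ) : ℝ)).mul_const (-P)
    have hbig := (hA1.mul hw).add (hu.mul (hB1.mul hw1))
    rw [hg1def]
    convert hbig using 1
    case e'_4 => rfl
    case e'_5 => rfl
    case e'_8 => rfl
    have e0 : (x ^ (m + 3) + (n : ℝ)) ^ (-P) = (x ^ (m + 3) + (n : ℝ)) ^ (-P - 2) * (x ^ (m + 3) + (n : ℝ)) ^ 2 := by
      rw [← Real.rpow_natCast (x ^ (m + 3) + (n : ℝ)) 2, ← Real.rpow_add hvx]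
      norm_num
    have e1 : (x ^ (m + 3) + (n : ℝ)) ^ (-P - 1) = (x ^ (m + 3) + (n : ℝ)) ^ (-P - 2) * (x ^ (m + 3) + (n : ℝ)) := by
      have h := Real.rpow_add hvx (-P - 2) 1
      rw [Real.rpow_one] at h
      rw [show -P - 1 = -P - 2 + 1 by ring, h]
    have e2 : (x ^ (m + 3) + (n : ℝ)) ^ (-P - 1 - 1) = (x ^ (m + 3) + (n : ℝ)) ^ (-P - 2) := by
      congr 1
      ring
    simp only [Pi.mul_apply]
    rw [e0, e1, e2]
    have hne : ((m : ℝ) + 2 + 1) ≠ 0 := by positivity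
    generalize (x ^ (m + 3) + (n : ℝ)) ^ (-P - 2) = W
    rw [hPdef]
    push_cast
    field_simp
    ring
  have hM : ∀ x : ℝ, 0 < x → x < 1 →
      ((m + 2 : ℕ) : ℝ) * ((m + 1 : ℕ) : ℝ) * x ^ (2 * m + 5) +
          (n : ℝ) * ((m + 2 : ℕ) : ℝ) * ((m + 4 : ℕ) : ℝ) * x ^ (2 * m + 3) -
          (n : ℝ) * ((m + 2 : ℕ) : ℝ) * ((m + 4 : ℕ) : ℝ) * x ^ (m + 2) -
          (n : ℝ) ^ 2 * ((m + 2 : ℕ) : ℝ) * ((m + 1 : ℕ) : ℝ) * x ^ m < 0 := by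
    intro x hx0 hx1
    have p1 : x ^ (2 * m + 5) ≤ x ^ (m + 2) := pow_le_pow_of_le_one hx0.le hx1.le (by omega)
    have p2 : x ^ (2 * m + 3) ≤ x ^ (m + 2) := pow_le_pow_of_le_one hx0.le hx1.le (by omega)
    have p3 : x ^ (m + 2) < x ^ m := pow_lt_pow_right_of_lt_one₀ hx0 hx1 (by omega)
    have p4 : (0 : ℝ) < x ^ m := by positivity
    have c1 : (0 : ℝ) < ((m + 2 : ℕ) : ℝ) * ((m + 1 : ℕ) : ℝ) := by positivity
    have c2 : (0 : ℝ) ≤ (n : ℝ) * ((m + 2 : ℕ) : ℝ) * ((m + 4 : ℕ) : ℝ) := by positivity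
    have c3 : (0 : ℝ) ≤ ((n : ℝ) ^ 2 - 1) * (((m + 2 : ℕ) : ℝ) * ((m + 1 : ℕ) : ℝ)) * x ^ m := by
      have : (0 : ℝ) ≤ (n : ℝ) ^ 2 - 1 := by nlinarith
      positivity
    nlinarith [mul_le_mul_of_nonneg_left p1 c1.le, mul_le_mul_of_nonneg_left p2 c2,
      mul_lt_mul_of_pos_left p3 c1]
  have hcont : ContinuousOn g (Icc (0 : ℝ) 1) := by
    rw [hgdef]
    apply ContinuousOn.mul (by fun_prop)
    apply ContinuousOn.rpow_const (by fun_prop)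
    intro x hx
    exact Or.inl (hv x hx.1).ne'
  have hgcc : StrictConcaveOn ℝ (Icc (0 : ℝ) 1) g := by
    apply strictConcaveOn_of_deriv2_neg (convex_Icc 0 1) hcont
    intro x hx
    rw [interior_Icc, mem_Ioo] at hx
    have hEq : deriv g =ᶠ[𝓝 x] g1 := by
      filter_upwards [Ioi_mem_nhds hx.1] with y hy
      exact (key1 y hy).deriv
    have h2 : deriv^[2] g x = deriv g1 x := by
      simp only [Function.iterate_succ, Function.iterate_zero, Function.comp_apply, id_eq]
      exact hEq.deriv_eq
    rw [h2, (key2 x hx.1 hx.2).deriv]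
    exact mul_neg_of_pos_of_neg (Real.rpow_pos_of_pos (hv x hx.1.le) _) (hM x hx.1 hx.2)
  apply hgcc.congr
  intro r hr
  simp only [hgdef]
  rw [Real.rpow_neg (hv r hr.1).le, div_eq_mul_inv]
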